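/- If the edge set S of a finite graph contains a cycle (in particular, a cycle on vertices 1,...,k with k≥2, including the case of a doubled edge), then the product over edges ij in S of (u_i·u_j + 1) vanishes in the Grassmann algebra, where u_i·u_j = -ξ_iη_j - ξ_jη_i - z_iz_j and z_i = 1 - ξ_iη_i. -/

import Mathlib

open ExteriorAlgebra

noncomputable section

/-- Coordinate module carrying the `2n` Grassmann generators. -/
abbrev GrM (n : ℕ) : Type := (Fin n × Bool) → ℝ

/-- The real Grassmann algebra with generators `(ξ i, η i)`. -/
abbrev Gr (n : ℕ) : Type := ExteriorAlgebra ℝ (GrM n)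

/-- Generator `ξ i`. -/
def gξ {n : ℕ} (i : Fin n) : Gr n := ι ℝ (Pi.single (i, false) (1 : ℝ))

/-- Generator `η i`. -/
def gη {n : ℕ} (i : Fin n) : Gr n := ι ℝ (Pi.single (i, true) (1 : ℝ))

/-- `z i = 1 - ξ i * η i`. -/
def gz {n : ℕ} (i : Fin n) : Gr n := 1 - gξ i * gη i

/-- `u i · u j = -ξ i η j - ξ j η i - z i z j`. -/
def udot {n : ℕ} (i j : Fin n) : Gr n := -(gξ i * gη j) - gξ j * gη i - gz i * gz j

/-- Grassmann (left) derivative `∂_{ξ i}`, i.e. left contraction. -/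
def dξ {n : ℕ} (i : Fin n) : Module.End ℝ (Gr n) :=
  CliffordAlgebra.contractLeft (Q := (0 : QuadraticForm ℝ (GrM n))) (LinearMap.proj (i, false))

/-- Grassmann (left) derivative `∂_{η i}`. -/
def dη {n : ℕ} (i : Fin n) : Module.End ℝ (Gr n) :=
  CliffordAlgebra.contractLeft (Q := (0 : QuadraticForm ℝ (GrM n))) (LinearMap.proj (i, true))

/-- The pair `∂_{η i} ∂_{ξ i}`. -/
def pairD {n : ℕ} (i : Fin n) : Module.End ℝ (Gr n) := dη i * dξ i

/-- `∏ i, ∂_{η i} ∂_{ξ i}`. -/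
def fullD {n : ℕ} : Module.End ℝ (Gr n) := (List.ofFn (fun i : Fin n => pairD i)).prod

/-- Plain Berezin integral: apply all derivatives, take the scalar (degree-0) part. -/
def bint {n : ℕ} (G : Gr n) : ℝ := algebraMapInv (fullD G)

/-- Hyperbolic fermionic integral `[G]_0 = ∏ᵢ ∂_{ηᵢ}∂_{ξᵢ} ((∏ᵢ (1+ξᵢηᵢ)) G)`,
using `1/zᵢ = 1 + ξᵢηᵢ`. -/
def sint {n : ℕ} (G : Gr n) : ℝ :=
  bint ((List.ofFn (fun i : Fin n => (1 : Gr n) + gξ i * gη i)).prod * G)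

/-- Exponential of a Grassmann element by its terminating power series:
for elements with vanishing degree-0 part, `x ^ (2n+1) = 0`, so the series below is exact. -/
def expG {n : ℕ} (x : Gr n) : Gr n :=
  ∑ k ∈ Finset.range (2 * n + 1), (k.factorial : ℝ)⁻¹ • x ^ k

section CycleAux

variable {n : ℕ}

lemma swapι (x y : GrM n) : ι ℝ x * ι ℝ y = -(ι ℝ y * ι ℝ x) :=
  eq_neg_of_add_eq_zero_left (ι_add_mul_swap x y)

lemma biv_central (x y : GrM n) (c : Gr n) : Commute (ι ℝ x * ι ℝ y) c := by
  induction c using ExteriorAlgebra.induction with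
  | algebraMap r => exact (Algebra.commutes r _).symm
  | ι z =>
      show ι ℝ x * ι ℝ y * ι ℝ z = ι ℝ z * (ι ℝ x * ι ℝ y)
      rw [mul_assoc, swapι y z, mul_neg, ← mul_assoc, swapι x z, neg_mul, neg_neg, mul_assoc]
  | mul a b ha hb => exact ha.mul_right hb
  | add a b ha hb => exact ha.add_right hb

lemma aba (x y : GrM n) : ι ℝ x * ι ℝ y * ι ℝ x = 0 := by
  rw [mul_assoc, swapι y x, mul_neg, ← mul_assoc, ι_sq_zero, zero_mul, neg_zero]

lemma biv_biv_right (p q r : GrM n) : (ι ℝ p * ι ℝ q) * (ι ℝ r * ι ℝ q) = 0 := by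
  rw [mul_assoc, ← mul_assoc (ι ℝ q), swapι q r, neg_mul, mul_neg, mul_assoc, ι_sq_zero,
    mul_zero, mul_zero, neg_zero]

lemma biv_biv_left (q p r : GrM n) : (ι ℝ q * ι ℝ p) * (ι ℝ q * ι ℝ r) = 0 := by
  rw [mul_assoc, ← mul_assoc (ι ℝ p), swapι p q, neg_mul, mul_neg, ← mul_assoc, ← mul_assoc,
    ι_sq_zero, zero_mul, zero_mul, neg_zero]


lemma gz_central (i : Fin n) (y : Gr n) : Commute (gz i) y :=
  (Commute.one_left y).sub_left (biv_central _ _ y)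

lemma factor_central (i j : Fin n) (y : Gr n) : Commute (udot i j + 1) y := by
  unfold udot
  exact (((biv_central _ _ y).neg_left.sub_left (biv_central _ _ y)).sub_left
    ((gz_central i y).mul_left (gz_central j y))).add_left (Commute.one_left y)

lemma udot_factor (i j : Fin n) :
    udot i j + 1 = (gξ i - gξ j) * ((gη i - gη j) * gz j) := by
  have h1 : gξ i * gη j * (gξ j * gη j) = 0 := biv_biv_right _ _ _
  have h2 : gξ j * gη i * (gξ j * gη j) = 0 := biv_biv_left _ _ _
  have h3 : gξ j * gη j * (gξ j * gη j) = 0 := biv_biv_left _ _ _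
  unfold udot gz
  noncomm_ring
  rw [mul_assoc] at h1 h2 h3
  rw [h1, h2, h3]
  simp

lemma udot_comm (i j : Fin n) : udot i j = udot j i := by
  unfold udot
  rw [(gz_central j (gz i)).eq]
  abel

lemma list_prod_erase' {M : Type*} [Monoid M] [DecidableEq M] :
    ∀ (l : List M) (g : M), g ∈ l → (∀ x ∈ l, ∀ y, Commute x y) →
      l.prod = (l.erase g).prod * g := by
  intro l
  induction l with
  | nil => intro g hg; simp at hg
  | cons h t ih =>
    intro g hg hc
    by_cases hgh : h = g
    · subst hgh
      rw [List.erase_cons_head, List.prod_cons, (hc h (List.mem_cons_self) t.prod).eq]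
    · rw [List.erase_cons_tail, List.prod_cons, List.prod_cons,
        ih g (by rcases List.mem_cons.mp hg with h' | h'; exact absurd h'.symm hgh; exact h')
          (fun x hx => hc x (List.mem_cons_of_mem _ hx)), mul_assoc]
      simp [hgh]

lemma pairwise_commute_of_central {M : Type*} [Monoid M] :
    ∀ (l : List M), (∀ x ∈ l, ∀ y, Commute x y) → l.Pairwise Commute := by
  intro l
  induction l with
  | nil => intro; exact List.Pairwise.nil
  | cons h t ih =>
    intro hc
    exact List.Pairwise.cons (fun y _ => hc h (List.mem_cons_self) y)
      (ih fun x hx => hc x (List.mem_cons_of_mem _ hx))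

lemma prod_zero {n K : ℕ} (a b : Fin (K + 1) → GrM n) (c : Fin (K + 1) → Gr n)
    (hc : ∀ m, ∀ y, Commute (c m) y) (ha : ∑ m, a m = 0) :
    (List.ofFn fun m => ι ℝ (a m) * ι ℝ (b m) * c m).prod = 0 := by
  classical
  set f : Fin (K + 1) → Gr n := fun m => ι ℝ (a m) * ι ℝ (b m) * c m with hf
  have hfc : ∀ m : Fin (K + 1), ∀ y, Commute (f m) y := fun m y =>
    (biv_central _ _ y).mul_left (hc m y)
  rw [List.ofFn_succ', List.concat_eq_append, List.prod_append, List.prod_cons,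
    List.prod_nil, mul_one]
  have hlast : a (Fin.last K) = -∑ m : Fin K, a m.castSucc := by
    rw [Fin.sum_univ_castSucc] at ha
    exact eq_neg_of_add_eq_zero_right ha
  have : f (Fin.last K) = -∑ m : Fin K, ι ℝ (a m.castSucc) * (ι ℝ (b (Fin.last K)) * c (Fin.last K)) := by
    rw [hf]
    simp only [hlast, map_neg, map_sum, mul_assoc, neg_mul, Finset.sum_mul]
  rw [this, mul_neg, Finset.mul_sum, neg_eq_zero]
  apply Finset.sum_eq_zero
  intro m _
  have hmem : f m.castSucc ∈ List.ofFn (fun m : Fin K => f m.castSucc) :=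
    List.mem_ofFn.mpr ⟨m, rfl⟩
  rw [list_prod_erase' _ _ hmem (fun x hx y => by
      obtain ⟨i, rfl⟩ := List.mem_ofFn.mp hx; exact hfc _ y)]
  set R : Gr n := ι ℝ (b (Fin.last K)) * c (Fin.last K) with hR
  have h1 : c m.castSucc * (ι ℝ (a m.castSucc) * R) =
      ι ℝ (a m.castSucc) * (c m.castSucc * R) := by
    rw [← mul_assoc, (hc m.castSucc (ι ℝ (a m.castSucc))).eq, mul_assoc]
  have hkey : f m.castSucc * (ι ℝ (a m.castSucc) * R) = 0 := by
    show ι ℝ (a m.castSucc) * ι ℝ (b m.castSucc) * c m.castSucc * (ι ℝ (a m.castSucc) * R) = 0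
    rw [mul_assoc (ι ℝ (a m.castSucc) * ι ℝ (b m.castSucc)), h1,
      ← mul_assoc (ι ℝ (a m.castSucc) * ι ℝ (b m.castSucc)), aba, zero_mul]
  rw [mul_assoc, hkey, mul_zero]


end CycleAux

set_option maxHeartbeats 2000000 in
/-- If the edge set `S` contains a cycle on distinct vertices
`v 0, …, v (k+1)` (length `k+2 ≥ 2`, the case of a doubled edge being the two
orientations of the same pair), then `∏_{ij ∈ S} (uᵢ·uⱼ + 1) = 0` in the Grassmann
algebra. -/
theorem cycle_product_vanishes (n k : ℕ) (S : Finset (Fin n × Fin n))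
    (v : Fin (k + 2) → Fin n) (hv : Function.Injective v)
    (e : Fin (k + 2) → Fin n × Fin n) (he : Function.Injective e)
    (heS : ∀ m : Fin (k + 2),
      e m ∈ S ∧ (e m = (v m, v (m + 1)) ∨ e m = (v (m + 1), v m))) :
    (S.toList.map (fun p => udot p.1 p.2 + 1)).prod = 0 := by
  classical
  set f : Fin n × Fin n → Gr n := fun p => udot p.1 p.2 + 1 with hfdef
  have hcent : ∀ p : Fin n × Fin n, ∀ y : Gr n, Commute (f p) y := fun p y =>
    factor_central _ _ y
  set a : Fin (k + 2) → GrM n :=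
    fun m => Pi.single (v m, false) 1 - Pi.single (v (m + 1), false) 1 with hadef
  set b : Fin (k + 2) → GrM n :=
    fun m => Pi.single (v m, true) 1 - Pi.single (v (m + 1), true) 1 with hbdef
  set c : Fin (k + 2) → Gr n :=
    fun m => if e m = (v m, v (m + 1)) then gz (v (m + 1)) else gz (v m) with hcdef
  have hccentral : ∀ m, ∀ y : Gr n, Commute (c m) y := by
    intro m y; rw [hcdef]; dsimp only; split_ifs <;> exact gz_central _ y
  have hsum : ∑ m, a m = 0 := by
    rw [hadef, Finset.sum_sub_distrib]
    have h2 : ∑ m : Fin (k + 2), (Pi.single (v (m + 1), false) 1 : GrM n) =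
        ∑ m : Fin (k + 2), (Pi.single (v m, false) 1 : GrM n) :=
      Fintype.sum_equiv (Equiv.addRight (1 : Fin (k + 2))) _ _ (fun m => rfl)
    rw [h2, sub_self]
  have hax : ∀ i j : Fin n,
      ι ℝ ((Pi.single (i, false) 1 : GrM n) - Pi.single (j, false) 1) = gξ i - gξ j :=
    fun i j => map_sub _ _ _
  have hbx : ∀ i j : Fin n,
      ι ℝ ((Pi.single (i, true) 1 : GrM n) - Pi.single (j, true) 1) = gη i - gη j :=
    fun i j => map_sub _ _ _
  have hfe : ∀ m : Fin (k + 2), f (e m) = ι ℝ (a m) * ι ℝ (b m) * c m := by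
    intro m
    rw [hadef, hbdef, hcdef]
    dsimp only
    rw [hax, hbx]
    by_cases hcond : e m = (v m, v (m + 1))
    · rw [if_pos hcond, hfdef]
      dsimp only
      rw [hcond]
      show udot (v m) (v (m + 1)) + 1 = _
      rw [udot_factor, mul_assoc]
    · rcases (heS m).2 with h | h
      · exact absurd h hcond
      · rw [if_neg hcond, hfdef]
        dsimp only
        rw [h]
        show udot (v (m + 1)) (v m) + 1 = _
        rw [udot_factor, ← neg_sub (gξ (v m)), ← neg_sub (gη (v m)), neg_mul, neg_mul,
          mul_neg, neg_neg, ← mul_assoc]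
  -- extract the cycle from S
  set t : List (Fin n × Fin n) := List.ofFn e with htdef
  have hnodup_t : t.Nodup := List.nodup_ofFn.mpr he
  have hsub : t ⊆ S.toList := by
    intro x hx
    obtain ⟨m, rfl⟩ := List.mem_ofFn.mp hx
    exact Finset.mem_toList.mpr (heS m).1
  have htle : (t : Multiset (Fin n × Fin n)) ≤ ↑S.toList :=
    Multiset.coe_le.mpr (hnodup_t.subperm hsub)
  set r : List (Fin n × Fin n) := ((S.toList : Multiset (Fin n × Fin n)) - (t : Multiset (Fin n × Fin n))).toList with hrdef
  have hperm : List.Perm S.toList (t ++ r) := by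
    rw [← Multiset.coe_eq_coe]
    show ((S.toList : Multiset (Fin n × Fin n))) = ↑(t ++ r)
    rw [← Multiset.coe_add, hrdef, Multiset.coe_toList, add_tsub_cancel_of_le htle]
  have hpair : (S.toList.map (fun p => udot p.1 p.2 + 1)).Pairwise Commute :=
    pairwise_commute_of_central _ (fun x hx y => by
      obtain ⟨p, hp, rfl⟩ := List.mem_map.mp hx; exact hcent p y)
  have hpe : (S.toList.map (fun p => udot p.1 p.2 + 1)).prod = ((t ++ r).map (fun p => udot p.1 p.2 + 1)).prod :=
    List.Perm.prod_eq' (M := Gr n) (hperm.map _) hpair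
  rw [hpe,
    List.map_append, List.prod_append]
  have hmap : t.map (fun p => udot p.1 p.2 + 1)
      = List.ofFn (fun m => ι ℝ (a m) * ι ℝ (b m) * c m) := by
    rw [htdef, List.map_ofFn]
    exact congrArg List.ofFn (funext hfe)
  rw [hmap, prod_zero a b c hccentral hsum, zero_mul]
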